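/- Let κ>0, let P be a transition function on ℝ satisfying the κ-scaling property, and let (G_{s,t})_{0≤s≤t} be a family of probability measures on (0,1] with G_{s,s}=δ₁ satisfying ∫∫ h(ab) G_{s,t}(da) G_{t,u}(db) = ∫ h(r) G_{s,u}(dr) for every bounded measurable h and all s≤t≤u. Define P̃(0,t,0,dy) = P(0,t,0,dy) and, for 0<s≤t, P̃(s,t,x,dy) = ∫_{(0,1]} P(rt, t, (t/s)^κ r^κ x, dy) G_{s,t}(dr). Then P̃ is a transition function: for each (s,t,x) it is a probability measure, it is measurable in x, P̃(s,s,x,·)=δ_x, and P̃ satisfies the Chapman–Kolmogorov equations ∫ P̃(s,t,x,dy) P̃(t,u,y,B) = P̃(s,u,x,B) for all s≤t≤u, x and measurable B. -/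

import Mathlib

open MeasureTheory ProbabilityTheory Real Filter Set
open scoped ENNReal NNReal

noncomputable section

/-- A transition function on `ℝ`: a family of probability measures `P s t x` (for `0 ≤ s ≤ t`),
measurable in `x`, with `P s s x = δ_x`, satisfying the Chapman–Kolmogorov equations. -/
structure IsTransitionFunction (P : ℝ → ℝ → ℝ → Measure ℝ) : Prop where
  prob : ∀ s t x, IsProbabilityMeasure (P s t x)
  meas : ∀ s t (B : Set ℝ), MeasurableSet B → Measurable fun x => P s t x B
  dirac : ∀ s x, 0 ≤ s → P s s x = Measure.dirac x
  chapman : ∀ s t u x (B : Set ℝ), 0 ≤ s → s ≤ t → t ≤ u → MeasurableSet B →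
    ∫⁻ y, P t u y B ∂(P s t x) = P s u x B

/-- The `κ`-scaling property: `P(cs, ct, c^κ x, c^κ dy) = P(s, t, x, dy)` for all `c > 0`. -/
def HasScaling (κ : ℝ) (P : ℝ → ℝ → ℝ → Measure ℝ) : Prop :=
  ∀ c s t x, 0 < c → 0 ≤ s → s ≤ t →
    P (c * s) (c * t) (c ^ κ * x) = Measure.map (fun y => c ^ κ * y) (P s t x)

/-- The randomised transition function `P̃(0,t,0,dy) = P(0,t,0,dy)` and, for `0 < s ≤ t`,
`P̃(s,t,x,dy) = ∫_{(0,1]} P(rt, t, (t/s)^κ r^κ x, dy) G_{s,t}(dr)`. -/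
def Ptilde (κ : ℝ) (P : ℝ → ℝ → ℝ → Measure ℝ) (G : ℝ → ℝ → Measure ℝ)
    (s t x : ℝ) : Measure ℝ :=
  if s = 0 then P 0 t 0
  else (G s t).bind fun r => P (r * t) t ((t / s) ^ κ * r ^ κ * x)

/-- Given a transition function `P` with the `κ`-scaling property and a family
`(G_{s,t})` of probability measures on `(0,1]` with `G_{s,s} = δ₁` satisfying
`∫∫ h(ab) G_{s,t}(da) G_{t,u}(db) = ∫ h(r) G_{s,u}(dr)`, the randomised family `P̃` is a
transition function: each `P̃(s,t,x,·)` is a probability measure, it is measurable in `x`,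
`P̃(s,s,x,·) = δ_x`, and the Chapman–Kolmogorov equations hold. -/
theorem stmt1 (κ : ℝ) (hκ : 0 < κ) (P : ℝ → ℝ → ℝ → Measure ℝ)
    (hP : IsTransitionFunction P) (hscal : HasScaling κ P)
    -- joint measurability of `(s, x) ↦ P s t x B` (part of the regularity of `P`)
    (hPmeas : ∀ (t : ℝ) (B : Set ℝ), MeasurableSet B →
      Measurable fun p : ℝ × ℝ => P p.1 t p.2 B)
    (G : ℝ → ℝ → Measure ℝ)
    (hGprob : ∀ s t, 0 ≤ s → s ≤ t → IsProbabilityMeasure (G s t))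
    (hGsupp : ∀ s t, 0 ≤ s → s ≤ t → G s t ((Set.Ioc (0:ℝ) 1)ᶜ) = 0)
    (hGdirac : ∀ s, 0 ≤ s → G s s = Measure.dirac 1)
    (hGconv : ∀ s t u, 0 ≤ s → s ≤ t → t ≤ u → ∀ h : ℝ → ℝ≥0∞, Measurable h →
      ∫⁻ a, ∫⁻ b, h (a * b) ∂(G t u) ∂(G s t) = ∫⁻ r, h r ∂(G s u)) :
    -- `P̃(s,t,x,·)` is a probability measure
    (∀ s t x, 0 ≤ s → s ≤ t → IsProbabilityMeasure (Ptilde κ P G s t x)) ∧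
    -- `P̃(s,t,·,B)` is measurable
    (∀ s t (B : Set ℝ), 0 ≤ s → s ≤ t → MeasurableSet B →
      Measurable fun x => Ptilde κ P G s t x B) ∧
    -- `P̃(s,s,x,·) = δ_x`
    (∀ s x, 0 < s → Ptilde κ P G s s x = Measure.dirac x) ∧
    (Ptilde κ P G 0 0 0 = Measure.dirac 0) ∧
    -- Chapman–Kolmogorov equations
    (∀ s t u x (B : Set ℝ), 0 < s → s ≤ t → t ≤ u → MeasurableSet B →
      ∫⁻ y, Ptilde κ P G t u y B ∂(Ptilde κ P G s t x) = Ptilde κ P G s u x B) ∧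
    (∀ t u (B : Set ℝ), 0 < t → t ≤ u → MeasurableSet B →
      ∫⁻ y, Ptilde κ P G t u y B ∂(Ptilde κ P G 0 t 0) = Ptilde κ P G 0 u 0 B) := by
  -- kernel measurability
  have hK : ∀ (s t x : ℝ), Measurable (fun r : ℝ => P (r * t) t ((t / s) ^ κ * r ^ κ * x)) := by
    intro s t x
    apply Measure.measurable_of_measurable_coe
    intro B hB
    exact (hPmeas t B hB).comp
      (show Measurable fun r : ℝ => ((r * t, (t / s) ^ κ * r ^ κ * x) : ℝ × ℝ) by fun_prop)
  -- measurability in x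
  have hmeasx : ∀ s t (B : Set ℝ), 0 ≤ s → s ≤ t → MeasurableSet B →
      Measurable fun x => Ptilde κ P G s t x B := by
    intro s t B hs hst hB
    rcases eq_or_ne s 0 with rfl | hs0
    · simp only [Ptilde, if_pos, if_true]; exact measurable_const
    · haveI := hGprob s t hs hst
      simp only [Ptilde, if_neg hs0]
      have heq : ∀ x : ℝ, ((G s t).bind fun r => P (r * t) t ((t / s) ^ κ * r ^ κ * x)) B
          = ∫⁻ r, P (r * t) t ((t / s) ^ κ * r ^ κ * x) B ∂(G s t) := fun x =>
        Measure.bind_apply hB (hK s t x).aemeasurable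
      simp only [heq]
      exact Measurable.lintegral_prod_right'
        ((hPmeas t B hB).comp
          (show Measurable fun p : ℝ × ℝ => ((p.2 * t, (t / s) ^ κ * p.2 ^ κ * p.1) : ℝ × ℝ)
            by fun_prop))
  -- probability
  have hprob : ∀ s t x, 0 ≤ s → s ≤ t → IsProbabilityMeasure (Ptilde κ P G s t x) := by
    intro s t x hs hst
    rcases eq_or_ne s 0 with rfl | hs0
    · simpa [Ptilde] using hP.prob 0 t 0
    · haveI := hGprob s t hs hst
      constructor
      rw [Ptilde, if_neg hs0, Measure.bind_apply MeasurableSet.univ (hK s t x).aemeasurable]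
      have h1 : ∀ r : ℝ, P (r * t) t ((t / s) ^ κ * r ^ κ * x) Set.univ = 1 := fun r =>
        (hP.prob _ _ _).measure_univ
      simp [h1, lintegral_one]
  -- dirac
  have hdirac : ∀ s x, 0 < s → Ptilde κ P G s s x = Measure.dirac x := by
    intro s x hs
    rw [Ptilde, if_neg hs.ne', hGdirac s hs.le, Measure.dirac_bind (hK s s x)]
    simp only [one_mul, div_self hs.ne', Real.one_rpow]
    exact hP.dirac s x hs.le
  -- core scaling computation
  have hcore : ∀ s t u x (B : Set ℝ), MeasurableSet B → 0 < s → s ≤ t → t ≤ u →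
      ∀ a b : ℝ, a ∈ Set.Ioc (0:ℝ) 1 → b ∈ Set.Ioc (0:ℝ) 1 →
      ∫⁻ y, P (b * u) u ((u / t) ^ κ * b ^ κ * y) B ∂(P (a * t) t ((t / s) ^ κ * a ^ κ * x))
        = P (a * b * u) u ((u / s) ^ κ * (a * b) ^ κ * x) B := by
    intro s t u x B hB hs hst htu a b ha hb
    have ht : 0 < t := lt_of_lt_of_le hs hst
    have hu : 0 < u := lt_of_lt_of_le ht htu
    obtain ⟨ha0, ha1⟩ := ha
    obtain ⟨hb0, hb1⟩ := hb
    set c : ℝ := b * u / t with hc_def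
    have hc : 0 < c := by positivity
    have hcoef : ∀ y : ℝ, (u / t) ^ κ * b ^ κ * y = c ^ κ * y := by
      intro y
      rw [hc_def, show b * u / t = (u / t) * b by ring,
        Real.mul_rpow (by positivity) hb0.le]
    simp only [hcoef]
    have hmF : Measurable fun w : ℝ => P (b * u) u w B :=
      (hPmeas u B hB).comp (measurable_const.prodMk measurable_id)
    rw [← lintegral_map hmF (measurable_const_mul (c ^ κ))]
    rw [show Measure.map (fun y => c ^ κ * y) (P (a * t) t ((t / s) ^ κ * a ^ κ * x))
        = P (c * (a * t)) (c * t) (c ^ κ * ((t / s) ^ κ * a ^ κ * x)) from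
      (hscal c (a * t) t _ hc (by positivity) (by nlinarith)).symm]
    have h1 : c * (a * t) = a * b * u := by rw [hc_def]; field_simp
    have h2 : c * t = b * u := by rw [hc_def]; field_simp
    have key : c ^ κ * ((t / s) ^ κ * a ^ κ) = (u / s) ^ κ * (a * b) ^ κ := by
      have e1 : (c * ((t / s) * a)) ^ κ = c ^ κ * ((t / s) ^ κ * a ^ κ) := by
        rw [Real.mul_rpow hc.le (by positivity), Real.mul_rpow (by positivity) ha0.le]
      have e2 : ((u / s) * (a * b)) ^ κ = (u / s) ^ κ * (a * b) ^ κ :=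
        Real.mul_rpow (by positivity) (by positivity)
      rw [← e1, ← e2]
      congr 1
      rw [hc_def]
      field_simp
    have h3 : c ^ κ * ((t / s) ^ κ * a ^ κ * x) = (u / s) ^ κ * (a * b) ^ κ * x := by
      calc c ^ κ * ((t / s) ^ κ * a ^ κ * x) = c ^ κ * ((t / s) ^ κ * a ^ κ) * x := by ring
        _ = (u / s) ^ κ * (a * b) ^ κ * x := by rw [key]
    rw [h1, h2, h3]
    exact hP.chapman (a * b * u) (b * u) u _ B (by positivity)
      (by nlinarith [mul_nonneg (mul_nonneg (sub_nonneg.mpr ha1) hb0.le) hu.le])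
      (by nlinarith [mul_nonneg (sub_nonneg.mpr hb1) hu.le]) hB
  -- core computation, zero case
  have hcore0 : ∀ t u (B : Set ℝ), MeasurableSet B → 0 < t → t ≤ u →
      ∀ b : ℝ, b ∈ Set.Ioc (0:ℝ) 1 →
      ∫⁻ y, P (b * u) u ((u / t) ^ κ * b ^ κ * y) B ∂(P 0 t 0) = P 0 u 0 B := by
    intro t u B hB ht htu b hb
    obtain ⟨hb0, hb1⟩ := hb
    have hu : 0 < u := lt_of_lt_of_le ht htu
    set c : ℝ := b * u / t with hc_def
    have hc : 0 < c := by positivity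
    have hcoef : ∀ y : ℝ, (u / t) ^ κ * b ^ κ * y = c ^ κ * y := by
      intro y
      rw [hc_def, show b * u / t = (u / t) * b by ring,
        Real.mul_rpow (by positivity) hb0.le]
    simp only [hcoef]
    have hmF : Measurable fun w : ℝ => P (b * u) u w B :=
      (hPmeas u B hB).comp (measurable_const.prodMk measurable_id)
    rw [← lintegral_map hmF (measurable_const_mul (c ^ κ))]
    rw [show Measure.map (fun y => c ^ κ * y) (P 0 t 0)
        = P (c * 0) (c * t) (c ^ κ * 0) from (hscal c 0 t 0 hc le_rfl ht.le).symm]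
    rw [mul_zero, mul_zero, show c * t = b * u by rw [hc_def]; field_simp]
    exact hP.chapman 0 (b * u) u 0 B le_rfl (by positivity) (by nlinarith) hB
  -- Chapman–Kolmogorov, positive case
  have hck : ∀ s t u x (B : Set ℝ), 0 < s → s ≤ t → t ≤ u → MeasurableSet B →
      ∫⁻ y, Ptilde κ P G t u y B ∂(Ptilde κ P G s t x) = Ptilde κ P G s u x B := by
    intro s t u x B hs hst htu hB
    have ht : 0 < t := lt_of_lt_of_le hs hst
    have hu : 0 < u := lt_of_lt_of_le ht htu
    haveI := hGprob s t hs.le hst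
    haveI := hGprob t u ht.le htu
    haveI := hGprob s u hs.le (hst.trans htu)
    have hf : Measurable fun y => Ptilde κ P G t u y B := hmeasx t u B ht.le htu hB
    have hPt : ∀ y : ℝ, Ptilde κ P G t u y B
        = ∫⁻ b, P (b * u) u ((u / t) ^ κ * b ^ κ * y) B ∂(G t u) := by
      intro y
      rw [Ptilde, if_neg ht.ne', Measure.bind_apply hB (hK t u y).aemeasurable]
    set h : ℝ → ℝ≥0∞ := fun r => P (r * u) u ((u / s) ^ κ * r ^ κ * x) B with hh
    have hmh : Measurable h := by
      rw [hh]
      exact (hPmeas u B hB).comp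
        (show Measurable fun r : ℝ => ((r * u, (u / s) ^ κ * r ^ κ * x) : ℝ × ℝ) by fun_prop)
    rw [show Ptilde κ P G s t x = (G s t).bind (fun r => P (r * t) t ((t / s) ^ κ * r ^ κ * x))
      from by rw [Ptilde, if_neg hs.ne']]
    rw [Measure.lintegral_bind (hK s t x).aemeasurable hf.aemeasurable]
    rw [show Ptilde κ P G s u x B = ∫⁻ r, h r ∂(G s u) from by
      rw [Ptilde, if_neg hs.ne', Measure.bind_apply hB (hK s u x).aemeasurable]]
    rw [← hGconv s t u hs.le hst htu h hmh]
    have hae : ∀ᵐ a ∂(G s t), a ∈ Set.Ioc (0:ℝ) 1 := mem_ae_iff.mpr (hGsupp s t hs.le hst)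
    refine lintegral_congr_ae (hae.mono fun a ha => ?_)
    haveI := hP.prob (a * t) t ((t / s) ^ κ * a ^ κ * x)
    calc ∫⁻ y, Ptilde κ P G t u y B ∂(P (a * t) t ((t / s) ^ κ * a ^ κ * x))
        = ∫⁻ y, ∫⁻ b, P (b * u) u ((u / t) ^ κ * b ^ κ * y) B ∂(G t u)
            ∂(P (a * t) t ((t / s) ^ κ * a ^ κ * x)) := by simp only [hPt]
      _ = ∫⁻ b, ∫⁻ y, P (b * u) u ((u / t) ^ κ * b ^ κ * y) B
            ∂(P (a * t) t ((t / s) ^ κ * a ^ κ * x)) ∂(G t u) := by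
          refine lintegral_lintegral_swap ?_
          exact ((hPmeas u B hB).comp
            (show Measurable fun p : ℝ × ℝ => ((p.2 * u, (u / t) ^ κ * p.2 ^ κ * p.1) : ℝ × ℝ)
              by fun_prop)).aemeasurable
      _ = ∫⁻ b, h (a * b) ∂(G t u) := by
          have haeb : ∀ᵐ b ∂(G t u), b ∈ Set.Ioc (0:ℝ) 1 :=
            mem_ae_iff.mpr (hGsupp t u ht.le htu)
          exact lintegral_congr_ae (haeb.mono fun b hb =>
            hcore s t u x B hB hs hst htu a b ha hb)
  -- Chapman–Kolmogorov, zero case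
  have hck0 : ∀ t u (B : Set ℝ), 0 < t → t ≤ u → MeasurableSet B →
      ∫⁻ y, Ptilde κ P G t u y B ∂(Ptilde κ P G 0 t 0) = Ptilde κ P G 0 u 0 B := by
    intro t u B ht htu hB
    have hu : 0 < u := lt_of_lt_of_le ht htu
    haveI := hGprob t u ht.le htu
    haveI := hP.prob 0 t 0
    have hPt : ∀ y : ℝ, Ptilde κ P G t u y B
        = ∫⁻ b, P (b * u) u ((u / t) ^ κ * b ^ κ * y) B ∂(G t u) := by
      intro y
      rw [Ptilde, if_neg ht.ne', Measure.bind_apply hB (hK t u y).aemeasurable]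
    rw [show Ptilde κ P G 0 t 0 = P 0 t 0 from by rw [Ptilde, if_pos rfl],
        show Ptilde κ P G 0 u 0 = P 0 u 0 from by rw [Ptilde, if_pos rfl]]
    calc ∫⁻ y, Ptilde κ P G t u y B ∂(P 0 t 0)
        = ∫⁻ y, ∫⁻ b, P (b * u) u ((u / t) ^ κ * b ^ κ * y) B ∂(G t u) ∂(P 0 t 0) := by
          simp only [hPt]
      _ = ∫⁻ b, ∫⁻ y, P (b * u) u ((u / t) ^ κ * b ^ κ * y) B ∂(P 0 t 0) ∂(G t u) := by
          refine lintegral_lintegral_swap ?_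
          exact ((hPmeas u B hB).comp
            (show Measurable fun p : ℝ × ℝ => ((p.2 * u, (u / t) ^ κ * p.2 ^ κ * p.1) : ℝ × ℝ)
              by fun_prop)).aemeasurable
      _ = ∫⁻ _, P 0 u 0 B ∂(G t u) := by
          have haeb : ∀ᵐ b ∂(G t u), b ∈ Set.Ioc (0:ℝ) 1 :=
            mem_ae_iff.mpr (hGsupp t u ht.le htu)
          exact lintegral_congr_ae (haeb.mono fun b hb => hcore0 t u B hB ht htu b hb)
      _ = P 0 u 0 B := by simp
  refine ⟨hprob, hmeasx, hdirac, ?_, hck, hck0⟩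
  rw [Ptilde, if_pos rfl]
  exact hP.dirac 0 0 le_rfl

end
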